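/- Let B be a nondegenerate alternating bilinear form on a finite-dimensional complex vector space V, and let P be nilpotent, self-adjoint with respect to B, and satisfy dim ker P^k = 2·min(k, n) for every k ≥ 0 (so (V, B, P) is a single Jordan block J_{0,2n}; in particular dim V = 2n). Let L be a P-invariant Lagrangian subspace and let h be its height, i.e. the least h with L ⊆ ker P^h. Then 2h ≥ n, and for every v ∈ L with v ∉ ker P^{h−1} one has L = span{v, P v, …, P^{h−1} v} + ker P^{n−h}. -/

import Mathlib

open Module

private lemma pow_apply_add' {V : Type*} [AddCommGroup V] [Module ℂ V]
    (P : V →ₗ[ℂ] V) (a b : ℕ) (x : V) : (P ^ (a + b)) x = (P ^ a) ((P ^ b) x) := by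
  rw [pow_add]; rfl

private lemma li_aux {V : Type*} [AddCommGroup V] [Module ℂ V]
    (P : V →ₗ[ℂ] V) (v : V) (h : ℕ)
    (h0 : (P ^ h) v = 0) (h1 : (P ^ (h - 1)) v ≠ 0) :
    LinearIndependent ℂ (fun i : Fin h => (P ^ (i : ℕ)) v) := by
  have hz : ∀ e : ℕ, h ≤ e → (P ^ e) v = 0 := by
    intro e he
    have he' : e = (e - h) + h := by omega
    rw [he', pow_apply_add', h0, map_zero]
  rw [Fintype.linearIndependent_iff]
  intro g hg
  have key : ∀ k : ℕ, ∀ i : Fin h, (i : ℕ) = k → g i = 0 := by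
    intro k
    induction k using Nat.strong_induction_on with
    | _ k ih =>
      intro i hik
      have hkh : k < h := hik ▸ i.isLt
      have happ : (P ^ (h - 1 - k)) (∑ j : Fin h, g j • (P ^ (j : ℕ)) v) = 0 := by
        rw [hg, map_zero]
      rw [map_sum] at happ
      have hterm : ∀ j : Fin h, j ∈ Finset.univ → j ≠ i →
          (P ^ (h - 1 - k)) (g j • (P ^ (j : ℕ)) v) = 0 := by
        intro j _ hj
        rcases lt_or_gt_of_ne (fun e : (j : ℕ) = (i : ℕ) => hj (Fin.ext e)) with hlt | hgt
        · rw [ih (j : ℕ) (by omega) j rfl, zero_smul, map_zero]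
        · rw [map_smul, ← pow_apply_add', hz (h - 1 - k + (j : ℕ)) (by omega), smul_zero]
      rw [Finset.sum_eq_single_of_mem i (Finset.mem_univ i) hterm, map_smul,
        ← pow_apply_add'] at happ
      have hexp : h - 1 - k + (i : ℕ) = h - 1 := by omega
      rw [hexp] at happ
      rcases smul_eq_zero.mp happ with hc | hc
      · exact hc
      · exact absurd hc h1
  exact fun i => key (i : ℕ) i rfl

/-- **Canonical description of bi-Lagrangian subspaces of a single Jordan block.**
Let `(V, B, P)` be a single Jordan block `J_{0,2n}`: `B` a nondegenerate alternating
form, `P` nilpotent and self-adjoint with `dim ker P^k = 2 · min(k, n)` for all `k`.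
If `L` is a `P`-invariant Lagrangian subspace of height `h` (the least `h` with
`L ⊆ ker P^h`), then `2h ≥ n`, and for every `v ∈ L` with `v ∉ ker P^{h-1}` one has
`L = span {v, P v, …, P^{h-1} v} + ker P^{n-h}`. -/
theorem oneJordanBlock_biLagrangian_canonical_form
    {V : Type*} [AddCommGroup V] [Module ℂ V] [FiniteDimensional ℂ V]
    (B : V →ₗ[ℂ] V →ₗ[ℂ] ℂ)
    (hBalt : ∀ v, B v v = 0)
    (hBnd : ∀ v, (∀ u, B v u = 0) → v = 0)
    (P : V →ₗ[ℂ] V)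
    (hPsa : ∀ u v, B (P u) v = B u (P v))
    (hPnil : IsNilpotent P)
    (n : ℕ)
    (hJ : ∀ k : ℕ, finrank ℂ (LinearMap.ker (P ^ k)) = 2 * min k n)
    (L : Submodule ℂ V)
    (hLiso : ∀ u ∈ L, ∀ v ∈ L, B u v = 0)
    (hLdim : 2 * finrank ℂ L = finrank ℂ V)
    (hLinv : ∀ u ∈ L, P u ∈ L)
    (h : ℕ)
    (hh : L ≤ LinearMap.ker (P ^ h))
    (hmin : ∀ m : ℕ, L ≤ LinearMap.ker (P ^ m) → h ≤ m) :
    n ≤ 2 * h ∧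
    ∀ v ∈ L, v ∉ LinearMap.ker (P ^ (h - 1)) →
      L = Submodule.span ℂ (Set.range fun i : Fin h => (P ^ (i : ℕ)) v) ⊔
          LinearMap.ker (P ^ (n - h)) := by
  classical
  -- dimension of V
  have hVdim : finrank ℂ V = 2 * n := by
    obtain ⟨N, hN⟩ := hPnil
    have h1 : finrank ℂ (LinearMap.ker (P ^ N)) = finrank ℂ V := by
      rw [hN, LinearMap.ker_zero, finrank_top]
    have h2 := hJ N
    have h3 := hJ n
    have h4 : finrank ℂ (LinearMap.ker (P ^ n)) ≤ finrank ℂ V := Submodule.finrank_le _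
    omega
  -- P ^ n = 0
  have hPn : P ^ n = 0 := by
    rw [← LinearMap.ker_eq_top]
    exact Submodule.eq_top_of_finrank_eq (by rw [hJ n]; omega)
  -- dimension of L
  have hLrank : finrank ℂ L = n := by omega
  -- first claim: n ≤ 2 h
  have hn2h : n ≤ 2 * h := by
    have := Submodule.finrank_mono hh
    rw [hJ h, hLrank] at this
    omega
  have hhn : h ≤ n := hmin n (by rw [LinearMap.ker_eq_top.mpr hPn]; exact le_top)
  refine ⟨hn2h, ?_⟩
  intro v hvL hv'
  -- h = 0 is impossible
  rcases Nat.eq_zero_or_pos h with hzero | hpos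
  · exact absurd (by simpa [hzero] using hh hvL) hv'
  have hvh : (P ^ h) v = 0 := LinearMap.mem_ker.mp (hh hvL)
  have hv1 : (P ^ (h - 1)) v ≠ 0 := fun e => hv' (LinearMap.mem_ker.mpr e)
  have hli : LinearIndependent ℂ (fun i : Fin h => (P ^ (i : ℕ)) v) := li_aux P v h hvh hv1
  -- powers of P applied to v stay in L
  have hpow_mem : ∀ i : ℕ, (P ^ i) v ∈ L := by
    intro i
    induction i with
    | zero => simpa using hvL
    | succ i ihi =>
      have : (P ^ (i + 1)) v = P ((P ^ i) v) := by
        rw [add_comm, pow_apply_add', pow_one]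
      rw [this]
      exact hLinv _ ihi
  set W : Submodule ℂ V := Submodule.span ℂ (Set.range fun i : Fin h => (P ^ (i : ℕ)) v)
    with hW
  have hWL : W ≤ L := by
    rw [hW, Submodule.span_le]
    rintro _ ⟨i, rfl⟩
    exact hpow_mem i
  -- B is reflexive and nondegenerate
  have hrefl : LinearMap.IsRefl B := LinearMap.IsAlt.isRefl hBalt
  have hnd : LinearMap.BilinForm.Nondegenerate B :=
    ⟨fun m hm => hBnd m hm, fun y hy => hBnd y (fun u => hrefl _ _ (hy u))⟩
  -- iterated self-adjointness
  have hsa : ∀ (k : ℕ) (u w : V), B ((P ^ k) u) w = B u ((P ^ k) w) := by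
    intro k
    induction k with
    | zero => intro u w; simp
    | succ k ihk =>
      intro u w
      have e1 : (P ^ (k + 1)) u = (P ^ k) (P u) := by rw [pow_succ]; rfl
      have e2 : (P ^ (k + 1)) w = P ((P ^ k) w) := by rw [pow_succ']; rfl
      rw [e1, ihk (P u) w, hPsa u ((P ^ k) w), ← e2]
  -- L equals its own orthogonal
  have hLperp : LinearMap.BilinForm.orthogonal B L = L := by
    have hle : L ≤ LinearMap.BilinForm.orthogonal B L := by
      intro x hx
      rw [LinearMap.BilinForm.mem_orthogonal_iff]
      intro y hy
      exact hLiso y hy x hx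
    have hfr := LinearMap.BilinForm.finrank_orthogonal hnd L
    rw [hLrank, hVdim] at hfr
    exact (Submodule.eq_of_le_of_finrank_le hle (by rw [hfr, hLrank]; omega)).symm
  -- range P^h = ker P^(n-h)
  have hrk : LinearMap.range (P ^ h) = LinearMap.ker (P ^ (n - h)) := by
    have hle : LinearMap.range (P ^ h) ≤ LinearMap.ker (P ^ (n - h)) := by
      rintro _ ⟨x, rfl⟩
      rw [LinearMap.mem_ker, ← pow_apply_add']
      have : n - h + h = n := by omega
      rw [this, hPn]
      rfl
    have hrn := LinearMap.finrank_range_add_finrank_ker (P ^ h)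
    rw [hJ h] at hrn
    refine Submodule.eq_of_le_of_finrank_le hle ?_
    rw [hJ (n - h)]
    omega
  -- the kernel part is contained in L
  have hKL : LinearMap.ker (P ^ (n - h)) ≤ L := by
    intro u hu
    rw [← hrk] at hu
    obtain ⟨x, rfl⟩ := hu
    rw [← hLperp, LinearMap.BilinForm.mem_orthogonal_iff]
    intro y hy
    have : B ((P ^ h) x) y = 0 := by
      rw [hsa]
      have : (P ^ h) y = 0 := LinearMap.mem_ker.mp (hh hy)
      rw [this, map_zero]
    exact hrefl _ _ this
  -- the small span W'
  set W' : Submodule ℂ V :=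
    Submodule.span ℂ (Set.range fun i : Fin (2 * h - n) => (P ^ (i : ℕ)) v) with hW'
  have hW'W : W' ≤ W := by
    rw [hW', Submodule.span_le]
    rintro _ ⟨i, rfl⟩
    exact Submodule.subset_span ⟨⟨(i : ℕ), by omega⟩, rfl⟩
  -- finrank W' = 2h - n
  have hW'rank : finrank ℂ W' = 2 * h - n := by
    have hfam : (fun i : Fin (2 * h - n) => (P ^ (i : ℕ)) v) =
        (fun i : Fin h => (P ^ (i : ℕ)) v) ∘ (fun i : Fin (2 * h - n) => ⟨(i : ℕ), by omega⟩) :=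
      rfl
    rw [hW', hfam]
    rw [finrank_span_eq_card (hli.comp _ (fun a b hab => by
      simpa [Fin.ext_iff] using hab))]
    simp
  -- the image of W' under P^(n-h) has the same dimension
  have hmaprank : finrank ℂ (Submodule.map (P ^ (n - h)) W') = 2 * h - n := by
    have : Submodule.map (P ^ (n - h)) W' =
        Submodule.span ℂ (Set.range fun i : Fin (2 * h - n) => (P ^ ((n - h) + (i : ℕ))) v) := by
      have hfun : ((P ^ (n - h)) ∘ fun i : Fin (2 * h - n) => (P ^ (i : ℕ)) v) =
          (fun i : Fin (2 * h - n) => (P ^ ((n - h) + (i : ℕ))) v) := by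
        funext i
        exact (pow_apply_add' P (n - h) (i : ℕ) v).symm
      rw [hW', Submodule.map_span, ← Set.range_comp, hfun]
    rw [this]
    have hfam : (fun i : Fin (2 * h - n) => (P ^ ((n - h) + (i : ℕ))) v) =
        (fun i : Fin h => (P ^ (i : ℕ)) v) ∘
          (fun i : Fin (2 * h - n) => ⟨(n - h) + (i : ℕ), by omega⟩) := rfl
    rw [hfam, finrank_span_eq_card (hli.comp _ (fun a b hab => by
      simpa [Fin.ext_iff] using hab))]
    simp
  -- W' ∩ ker P^(n-h) = ⊥
  have hdisj : W' ⊓ LinearMap.ker (P ^ (n - h)) = ⊥ := by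
    set g : W' →ₗ[ℂ] V := (P ^ (n - h)).comp W'.subtype with hg
    have hrange : LinearMap.range g = Submodule.map (P ^ (n - h)) W' := by
      rw [hg, LinearMap.range_comp, Submodule.range_subtype]
    have hrn := LinearMap.finrank_range_add_finrank_ker g
    rw [hrange, hmaprank, hW'rank] at hrn
    have hker : LinearMap.ker g = ⊥ := Submodule.finrank_eq_zero.mp (by omega)
    rw [eq_bot_iff]
    rintro x ⟨hx1, hx2⟩
    have : (⟨x, hx1⟩ : W') ∈ LinearMap.ker g := by
      rw [LinearMap.mem_ker, hg]
      exact hx2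
    rw [hker, Submodule.mem_bot] at this
    simpa using congrArg Subtype.val this
  -- dimension of W' ⊔ ker P^(n-h)
  have hsuprank : finrank ℂ (W' ⊔ LinearMap.ker (P ^ (n - h)) : Submodule ℂ V) = n := by
    have := Submodule.finrank_sup_add_finrank_inf_eq W' (LinearMap.ker (P ^ (n - h)))
    rw [hdisj, finrank_bot, hW'rank, hJ (n - h)] at this
    omega
  -- conclude
  have hle : W ⊔ LinearMap.ker (P ^ (n - h)) ≤ L := sup_le hWL hKL
  have hge : finrank ℂ L ≤ finrank ℂ (W ⊔ LinearMap.ker (P ^ (n - h)) : Submodule ℂ V) := by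
    have h1 := Submodule.finrank_mono (sup_le_sup_right hW'W (LinearMap.ker (P ^ (n - h))))
    omega
  exact (Submodule.eq_of_le_of_finrank_le hle hge).symm
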